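/- Let L be the Laplacian of an undirected connected graph on N vertices and let x : [0,∞) → ℝ^N solve ẋ(t) = −L·x(t). Then x(t) converges as t → ∞ to the average consensus vector ( (1/N)·Σᵢ xᵢ(0) )·1_N, and the quantity 1_Nᵀ x(t) is constant in time. -/

import Mathlib

open Matrix

lemma stmt_14_dot_self_nonneg {n : ℕ} (v : Fin n → ℝ) : 0 ≤ v ⬝ᵥ v :=
  Finset.sum_nonneg fun _ _ => mul_self_nonneg _

/-- Spectral gap of the Laplacian on the hyperplane orthogonal to the all-ones vector. -/
lemma stmt_14_spec_gap (N : ℕ) (L : Matrix (Fin N) (Fin N) ℝ)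
    (hLpsd : L.PosSemidef)
    (hker : ∀ v : Fin N → ℝ, L.mulVec v = 0 ↔ ∃ c : ℝ, v = fun _ => c) :
    ∃ lam : ℝ, 0 < lam ∧ ∀ v : Fin N → ℝ, (∑ i, v i = 0) →
      lam * (v ⬝ᵥ v) ≤ v ⬝ᵥ L.mulVec v := by
  set S : Set (Fin N → ℝ) := {v | (∑ i, v i = 0) ∧ v ⬝ᵥ v = 1} with hS
  have hmemS : ∀ v : Fin N → ℝ, (∑ i, v i = 0) → v ≠ 0 →
      (Real.sqrt (v ⬝ᵥ v))⁻¹ • v ∈ S := by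
    intro v hsum hv
    have hvv : 0 < v ⬝ᵥ v :=
      lt_of_le_of_ne (stmt_14_dot_self_nonneg v)
        (fun h => hv (dotProduct_self_eq_zero.mp h.symm))
    have hsq : Real.sqrt (v ⬝ᵥ v) > 0 := Real.sqrt_pos.mpr hvv
    constructor
    · simp only [Pi.smul_apply, smul_eq_mul, ← Finset.mul_sum, hsum, mul_zero]
    · have : ((Real.sqrt (v ⬝ᵥ v))⁻¹ • v) ⬝ᵥ ((Real.sqrt (v ⬝ᵥ v))⁻¹ • v)
          = (Real.sqrt (v ⬝ᵥ v))⁻¹ * ((Real.sqrt (v ⬝ᵥ v))⁻¹ * (v ⬝ᵥ v)) := by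
        rw [smul_dotProduct, dotProduct_smul]; simp [smul_eq_mul]
      rw [this, ← mul_assoc, ← mul_inv, Real.mul_self_sqrt hvv.le,
        inv_mul_cancel₀ hvv.ne']
  by_cases hne : S.Nonempty
  · have hclosed : IsClosed S := by
      apply IsClosed.inter
      · exact isClosed_eq (by continuity) continuous_const
      · exact isClosed_eq (by continuity) continuous_const
    have hbdd : Bornology.IsBounded S := by
      apply (Metric.isBounded_closedBall (x := (0 : Fin N → ℝ)) (r := 1)).subset
      intro v hv
      simp only [Metric.mem_closedBall, dist_zero_right]
      rw [pi_norm_le_iff_of_nonneg zero_le_one]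
      intro i
      have h1 : v i * v i ≤ v ⬝ᵥ v :=
        Finset.single_le_sum (fun j _ => mul_self_nonneg (v j)) (Finset.mem_univ i)
      rw [hv.2] at h1
      rw [Real.norm_eq_abs]
      exact abs_le_one_iff_mul_self_le_one.mpr h1
    have hcompact : IsCompact S := Metric.isCompact_of_isClosed_isBounded hclosed hbdd
    have hcont : Continuous fun v : Fin N → ℝ => v ⬝ᵥ L.mulVec v := by
      have : ∀ v : Fin N → ℝ, v ⬝ᵥ L.mulVec v = ∑ i, v i * ∑ j, L i j * v j := by
        intro v; rfl
      simp only [this]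
      exact continuous_finset_sum _ fun i _ =>
        (continuous_apply i).mul (continuous_finset_sum _ fun j _ =>
          continuous_const.mul (continuous_apply j))
    obtain ⟨v₀, hv₀S, hmin⟩ := hcompact.exists_isMinOn hne hcont.continuousOn
    set lam := v₀ ⬝ᵥ L.mulVec v₀ with hlam
    have hlam_nonneg : 0 ≤ lam := by
      have := hLpsd.dotProduct_mulVec_nonneg v₀; simpa using this
    have hlam_pos : 0 < lam := by
      rcases hlam_nonneg.lt_or_eq with h | h
      · exact h
      · exfalso
        have hz : L.mulVec v₀ = 0 := by
          rw [← hLpsd.dotProduct_mulVec_zero_iff v₀]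
          simpa using h.symm
        obtain ⟨c, hc⟩ := (hker v₀).mp hz
        have hsum := hv₀S.1
        rw [hc] at hsum
        simp [Finset.sum_const] at hsum
        have h1 := hv₀S.2
        rcases hsum with hN0 | hc0
        · rw [hc] at h1
          unfold dotProduct at h1
          rw [Finset.sum_eq_zero (fun i _ => by exact absurd i.2 (by omega))] at h1
          exact one_ne_zero h1.symm
        · rw [hc, hc0] at h1
          simp [dotProduct] at h1
    refine ⟨lam, hlam_pos, fun v hsum => ?_⟩
    by_cases hv : v = 0
    · subst hv; simp
    · have hw := hmemS v hsum hv
      have hvv : 0 < v ⬝ᵥ v :=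
        lt_of_le_of_ne (stmt_14_dot_self_nonneg v)
          (fun h => hv (dotProduct_self_eq_zero.mp h.symm))
      have hle : lam ≤ (Real.sqrt (v ⬝ᵥ v))⁻¹ • v ⬝ᵥ
          L.mulVec ((Real.sqrt (v ⬝ᵥ v))⁻¹ • v) := hmin hw
      set r := Real.sqrt (v ⬝ᵥ v) with hr
      have hrpos : 0 < r := Real.sqrt_pos.mpr hvv
      have hexp : (r⁻¹ • v) ⬝ᵥ L.mulVec (r⁻¹ • v) = r⁻¹ * r⁻¹ * (v ⬝ᵥ L.mulVec v) := by
        rw [mulVec_smul, smul_dotProduct, dotProduct_smul]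
        simp [smul_eq_mul]; ring
      rw [hexp] at hle
      have hr2 : r * r = v ⬝ᵥ v := Real.mul_self_sqrt hvv.le
      have := mul_le_mul_of_nonneg_left hle (mul_pos hrpos hrpos).le
      calc lam * (v ⬝ᵥ v) = r * r * lam := by rw [hr2]; ring
        _ ≤ r * r * (r⁻¹ * r⁻¹ * (v ⬝ᵥ L.mulVec v)) := this
        _ = v ⬝ᵥ L.mulVec v := by field_simp
  · refine ⟨1, one_pos, fun v hsum => ?_⟩
    by_cases hv : v = 0
    · subst hv; simp
    · exact absurd ⟨_, hmemS v hsum hv⟩ hne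

/-- For the Laplacian `L` of an undirected connected graph (symmetric, PSD,
kernel `span 1`), any solution of `ẋ = -L x` converges to the average-consensus vector
`((1/N) Σᵢ xᵢ(0)) 1`, and `1ᵀ x(t)` is constant in time. -/
theorem stmt_14 (N : ℕ) (hN : 0 < N) (L : Matrix (Fin N) (Fin N) ℝ)
    (hLsymm : L.IsSymm) (hLpsd : L.PosSemidef)
    (hker : ∀ v : Fin N → ℝ, L.mulVec v = 0 ↔ ∃ c : ℝ, v = fun _ => c)
    (x : ℝ → Fin N → ℝ)
    (hode : ∀ t, HasDerivAt x (-(L.mulVec (x t))) t) :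
    Filter.Tendsto x Filter.atTop
        (nhds (fun _ => (∑ i, x 0 i) / (N : ℝ))) ∧
      ∀ t, ∑ i, x t i = ∑ i, x 0 i := by
  -- column sums of L vanish
  have hcolsum : ∀ w : Fin N → ℝ, ∑ i, (L.mulVec w) i = 0 := by
    have hL1 : L.mulVec (fun _ => (1:ℝ)) = 0 := (hker _).mpr ⟨1, rfl⟩
    have hrow : ∀ i, ∑ j, L i j = 0 := by
      intro i
      have := congrFun hL1 i
      simpa [mulVec, dotProduct] using this
    have hcol : ∀ j, ∑ i, L i j = 0 := by
      intro j
      have : ∀ i, L i j = L j i := fun i => by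
        conv_lhs => rw [← hLsymm]
        rfl
      simp only [this]
      exact hrow j
    intro w
    have : ∑ i, (L.mulVec w) i = ∑ j, (∑ i, L i j) * w j := by
      simp only [mulVec, dotProduct, Finset.sum_mul]
      rw [Finset.sum_comm]
    rw [this]
    simp [hcol]
  -- conservation of the sum
  have hconst : ∀ t, ∑ i, x t i = ∑ i, x 0 i := by
    have hds : ∀ t, HasDerivAt (fun t => ∑ i, x t i) 0 t := by
      intro t
      have h := HasDerivAt.fun_sum (u := Finset.univ)
        (fun i _ => hasDerivAt_pi.mp (hode t) i)
      have h2 : ∑ i, (-(L.mulVec (x t))) i = 0 := by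
        simp only [Pi.neg_apply, Finset.sum_neg_distrib]
        rw [hcolsum (x t)]; ring
      rwa [h2] at h
    intro t
    exact is_const_of_deriv_eq_zero (fun s => (hds s).differentiableAt)
      (fun s => (hds s).deriv) t 0
  refine ⟨?_, hconst⟩
  obtain ⟨lam, hlam, hgap⟩ := stmt_14_spec_gap N L hLpsd hker
  set c : ℝ := (∑ i, x 0 i) / (N : ℝ) with hc
  set y : ℝ → Fin N → ℝ := fun t i => x t i - c with hy
  have hNne : (N : ℝ) ≠ 0 := Nat.cast_ne_zero.mpr hN.ne'
  have hysum : ∀ t, ∑ i, y t i = 0 := by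
    intro t
    simp only [hy, Finset.sum_sub_distrib, hconst t, Finset.sum_const,
      Finset.card_univ, Fintype.card_fin, nsmul_eq_mul, hc]
    field_simp
    ring
  have hLy : ∀ t, L.mulVec (x t) = L.mulVec (y t) := by
    intro t
    have hc0 : L.mulVec (fun _ => c) = 0 := (hker _).mpr ⟨c, rfl⟩
    have hxt : x t = y t + fun _ => c := by funext i; simp [hy]
    rw [hxt, mulVec_add, hc0, add_zero]
  set g : ℝ → ℝ := fun t => ∑ i, (y t i) ^ 2 with hg
  have hgy : ∀ t, g t = y t ⬝ᵥ y t := by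
    intro t; simp [hg, dotProduct, sq]
  have hgnonneg : ∀ t, 0 ≤ g t := fun t => Finset.sum_nonneg fun i _ => sq_nonneg _
  have hgderiv : ∀ t, HasDerivAt g (-2 * (y t ⬝ᵥ L.mulVec (y t))) t := by
    intro t
    have h := HasDerivAt.fun_sum (u := Finset.univ)
      (fun i _ => (((hasDerivAt_pi.mp (hode t) i).sub_const c).pow 2))
    have heq : ∑ i, (2 : ℕ) * (x t i - c) ^ (2 - 1) * (-(L.mulVec (x t))) i
        = -2 * (y t ⬝ᵥ L.mulVec (y t)) := by
      rw [← hLy t]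
      simp only [dotProduct, Finset.mul_sum, hy]
      apply Finset.sum_congr rfl
      intro i _
      simp only [Pi.neg_apply]
      ring
    rw [heq] at h
    exact h
  have hgineq : ∀ t, -2 * (y t ⬝ᵥ L.mulVec (y t)) ≤ -2 * lam * g t := by
    intro t
    have := hgap (y t) (hysum t)
    rw [← hgy t] at this
    nlinarith
  set h : ℝ → ℝ := fun t => g t * Real.exp (2 * lam * t) with hh
  have hhderiv : ∀ t, HasDerivAt h
      ((-2 * (y t ⬝ᵥ L.mulVec (y t)) + 2 * lam * g t) * Real.exp (2 * lam * t)) t := by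
    intro t
    have he : HasDerivAt (fun t => Real.exp (2 * lam * t))
        (Real.exp (2 * lam * t) * (2 * lam)) t := by
      have : HasDerivAt (fun t : ℝ => 2 * lam * t) (2 * lam) t := by
        simpa using (hasDerivAt_id t).const_mul (2 * lam)
      exact this.exp
    have := (hgderiv t).fun_mul he
    refine this.congr_deriv ?_
    ring
  have hhanti : Antitone h := by
    apply antitone_of_deriv_nonpos (fun t => (hhderiv t).differentiableAt)
    intro t
    rw [(hhderiv t).deriv]
    apply mul_nonpos_of_nonpos_of_nonneg _ (Real.exp_pos _).le
    have := hgineq t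
    linarith
  have hgbound : ∀ t, 0 ≤ t → g t ≤ g 0 * Real.exp (-(2 * lam * t)) := by
    intro t ht
    have hle := hhanti ht
    simp only [hh, mul_zero, Real.exp_zero, mul_one] at hle
    rw [← le_div_iff₀ (Real.exp_pos _)] at hle
    rw [Real.exp_neg]
    simpa [div_eq_mul_inv] using hle
  have hgtend : Filter.Tendsto g Filter.atTop (nhds 0) := by
    apply squeeze_zero' (Filter.Eventually.of_forall hgnonneg)
      ((Filter.eventually_ge_atTop 0).mono hgbound)
    have h1 : Filter.Tendsto (fun t : ℝ => 2 * lam * t) Filter.atTop Filter.atTop :=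
      Filter.Tendsto.const_mul_atTop (by linarith) Filter.tendsto_id
    have h2 := Real.tendsto_exp_neg_atTop_nhds_zero.comp h1
    simpa using h2.const_mul (g 0)
  rw [tendsto_pi_nhds]
  intro i
  rw [tendsto_iff_dist_tendsto_zero]
  have hsq : Filter.Tendsto (fun t => (x t i - c) ^ 2) Filter.atTop (nhds 0) := by
    apply squeeze_zero' (Filter.Eventually.of_forall fun t => sq_nonneg _)
      (Filter.Eventually.of_forall fun t => ?_) hgtend
    exact Finset.single_le_sum (fun j _ => sq_nonneg (y t j)) (Finset.mem_univ i)
  have := (Real.continuous_sqrt.tendsto 0).comp hsq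
  simp only [Function.comp_def, Real.sqrt_zero] at this
  convert this using 2 with t
  rw [Real.dist_eq, Real.sqrt_sq_eq_abs]
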